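/- Under Gaussian summary data, the debiased loss is an unbiased estimator of the oracle loss up to a constant: for every fixed β ∈ ℝ^K, E[(1/2)β^T(Π̂^T W Π̂ − V)β − Γ̂^T W Π̂ β] = (1/2)β^T Π^T W Π β − Γ^T W Π β, where V = Σ_j Σ_{Xj} σ_{Yj}^{-2}. -/

import Mathlib

open MeasureTheory ProbabilityTheory Matrix Finset
open scoped NNReal ENNReal
open Real Filter

section ExpMoments

lemma integrable_sq_exp {b : ℝ} (hb : 0 < b) :
    Integrable (fun x : ℝ => x ^ 2 * Real.exp (-b * x ^ 2)) := by
  have := integrable_rpow_mul_exp_neg_mul_sq hb (s := 2) (by norm_num)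
  simpa [Real.rpow_natCast] using this

lemma integral_lin_exp {b : ℝ} (hb : 0 < b) :
    ∫ x : ℝ, x * Real.exp (-b * x ^ 2) = 0 := by
  have hderiv : ∀ x : ℝ, HasDerivAt (fun y => -(2*b)⁻¹ * Real.exp (-b * y ^ 2))
      (x * Real.exp (-b * x ^ 2)) x := by
    intro x
    have h1 : HasDerivAt (fun y : ℝ => -b * y ^ 2) (-b * (2 * x)) x := by
      simpa using ((hasDerivAt_pow 2 x).const_mul (-b))
    have h2 := (h1.exp).const_mul (-(2*b)⁻¹)
    refine h2.congr_deriv ?_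
    field_simp
  have := integral_eq_zero_of_hasDerivAt_of_integrable hderiv
    (integrable_mul_exp_neg_mul_sq hb)
    ((integrable_exp_neg_mul_sq hb).const_mul _)
  simpa using this

lemma integral_sq_exp {b : ℝ} (hb : 0 < b) :
    ∫ x : ℝ, x ^ 2 * Real.exp (-b * x ^ 2) = (2*b)⁻¹ * Real.sqrt (π / b) := by
  have hderiv : ∀ x : ℝ, HasDerivAt (fun y => y * Real.exp (-b * y ^ 2))
      (Real.exp (-b * x ^ 2) - 2 * b * (x ^ 2 * Real.exp (-b * x ^ 2))) x := by
    intro x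
    have h1 : HasDerivAt (fun y : ℝ => -b * y ^ 2) (-b * (2 * x)) x := by
      simpa using ((hasDerivAt_pow 2 x).const_mul (-b))
    have h2 := (hasDerivAt_id x).mul (h1.exp)
    simp only [id] at h2
    refine h2.congr_deriv ?_
    ring
  have hint : Integrable (fun x : ℝ => Real.exp (-b * x ^ 2) - 2 * b * (x ^ 2 * Real.exp (-b * x ^ 2))) :=
    (integrable_exp_neg_mul_sq hb).sub ((integrable_sq_exp hb).const_mul _)
  have hz := integral_eq_zero_of_hasDerivAt_of_integrable hderiv hint
    (integrable_mul_exp_neg_mul_sq hb)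
  rw [integral_sub (integrable_exp_neg_mul_sq hb) ((integrable_sq_exp hb).const_mul _),
    MeasureTheory.integral_const_mul, integral_gaussian] at hz
  have hb2 : (2:ℝ) * b ≠ 0 := by positivity
  field_simp at hz ⊢
  linarith

end ExpMoments

section GaussianMoments
variable {v : ℝ≥0} {m : ℝ}

lemma pdf0_eq (x : ℝ) :
    gaussianPDFReal 0 v x = (Real.sqrt (2 * π * v))⁻¹ * Real.exp (-(2 * (v:ℝ))⁻¹ * x ^ 2) := by
  rw [gaussianPDFReal]
  congr 1
  rw [Real.exp_eq_exp, sub_zero, neg_div, div_eq_inv_mul, neg_mul]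

lemma integral_gaussianReal' (m : ℝ) (f : ℝ → ℝ) (hv : v ≠ 0) :
    ∫ x, f x ∂(gaussianReal m v) = ∫ x, gaussianPDFReal m v x * f x := by
  rw [gaussianReal_of_var_ne_zero m hv]
  have h : gaussianPDF m v = fun x => ((Real.toNNReal (gaussianPDFReal m v x) : ℝ≥0) : ℝ≥0∞) := rfl
  rw [h, integral_withDensity_eq_integral_smul
    ((measurable_gaussianPDFReal m v).real_toNNReal) f]
  congr 1
  ext x
  rw [NNReal.smul_def, Real.coe_toNNReal _ (gaussianPDFReal_nonneg m v x), smul_eq_mul]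

lemma integrable_gaussianReal_iff (m : ℝ) (f : ℝ → ℝ) (hv : v ≠ 0) :
    Integrable f (gaussianReal m v) ↔ Integrable (fun x => gaussianPDFReal m v x * f x) := by
  rw [gaussianReal_of_var_ne_zero m hv]
  have h : gaussianPDF m v = fun x => ((Real.toNNReal (gaussianPDFReal m v x) : ℝ≥0) : ℝ≥0∞) := rfl
  rw [h, integrable_withDensity_iff_integrable_smul
    ((measurable_gaussianPDFReal m v).real_toNNReal)]
  constructor <;> intro hh <;> [skip; skip] <;>
    (apply hh.congr; filter_upwards with x;
     rw [NNReal.smul_def, Real.coe_toNNReal _ (gaussianPDFReal_nonneg m v x), smul_eq_mul])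

variable (hv : v ≠ 0)
include hv

lemma hvpos : 0 < (v:ℝ) := by
  have : v ≠ 0 := hv
  positivity

lemma hbpos : 0 < (2 * (v:ℝ))⁻¹ := by
  have := hvpos hv
  positivity

lemma g1 : Integrable (fun x => gaussianPDFReal 0 v x * x) := by
  refine ((integrable_mul_exp_neg_mul_sq (hbpos hv)).const_mul
    (Real.sqrt (2 * π * v))⁻¹).congr ?_
  filter_upwards with x
  rw [pdf0_eq]; ring

lemma g2 : Integrable (fun x => gaussianPDFReal 0 v x * x ^ 2) := by
  refine ((integrable_sq_exp (hbpos hv)).const_mul (Real.sqrt (2 * π * v))⁻¹).congr ?_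
  filter_upwards with x
  rw [pdf0_eq]; ring

lemma e1 : ∫ x : ℝ, gaussianPDFReal 0 v x * x = 0 := by
  have h : ∀ x : ℝ, gaussianPDFReal 0 v x * x
      = (Real.sqrt (2 * π * v))⁻¹ * (x * Real.exp (-(2 * (v:ℝ))⁻¹ * x ^ 2)) := by
    intro x; rw [pdf0_eq]; ring
  simp_rw [h]
  rw [MeasureTheory.integral_const_mul, integral_lin_exp (hbpos hv), mul_zero]

lemma e2 : ∫ x : ℝ, gaussianPDFReal 0 v x * x ^ 2 = v := by
  have h : ∀ x : ℝ, gaussianPDFReal 0 v x * x ^ 2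
      = (Real.sqrt (2 * π * v))⁻¹ * (x ^ 2 * Real.exp (-(2 * (v:ℝ))⁻¹ * x ^ 2)) := by
    intro x; rw [pdf0_eq]; ring
  simp_rw [h]
  rw [MeasureTheory.integral_const_mul, integral_sq_exp (hbpos hv)]
  have hv' := hvpos hv
  have h1 : ((2:ℝ) * (2 * (v:ℝ))⁻¹)⁻¹ = (v:ℝ) := by field_simp
  have h2 : Real.sqrt (π / (2 * (v:ℝ))⁻¹) = Real.sqrt (2 * π * v) := by
    congr 1; field_simp
  rw [h1, h2]
  have h3 : Real.sqrt (2 * π * v) ≠ 0 := by positivity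
  field_simp

end GaussianMoments

section Main
variable {v : ℝ≥0} {m : ℝ}

lemma pdf_shift (x : ℝ) : gaussianPDFReal m v (x + m) = gaussianPDFReal 0 v x := by
  rw [gaussianPDFReal_add]; simp

lemma pdf_center (x : ℝ) : gaussianPDFReal m v x = gaussianPDFReal 0 v (x - m) := by
  rw [gaussianPDFReal_sub, zero_add]

lemma integrable_id_gaussianReal (m : ℝ) (v : ℝ≥0) :
    Integrable (fun x : ℝ => x) (gaussianReal m v) := by
  by_cases hv : v = 0
  · simp only [hv, gaussianReal_zero_var]
    exact (integrable_const (m : ℝ)).congr (ae_eq_dirac (fun x : ℝ => x)).symm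
  rw [integrable_gaussianReal_iff m _ hv]
  have hF : Integrable (fun y : ℝ => gaussianPDFReal 0 v y * (y + m)) := by
    have h1 : Integrable (fun y : ℝ => gaussianPDFReal 0 v y * y + gaussianPDFReal 0 v y * m) :=
      (g1 hv).add ((integrable_gaussianPDFReal 0 v).mul_const m)
    refine h1.congr ?_
    filter_upwards with x; ring
  refine (hF.comp_sub_right m).congr ?_
  filter_upwards with x
  rw [sub_add_cancel, ← pdf_center]

lemma integral_id_gaussianReal (m : ℝ) (v : ℝ≥0) :
    ∫ x, x ∂(gaussianReal m v) = m := by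
  by_cases hv : v = 0
  · simp [hv, gaussianReal_zero_var, integral_dirac]
  rw [integral_gaussianReal' m _ hv]
  have h : ∀ x : ℝ, gaussianPDFReal m v x * x
      = (fun y => gaussianPDFReal 0 v y * (y + m)) (x - m) := by
    intro x; simp only [sub_add_cancel, ← pdf_center]
  simp_rw [h]
  rw [integral_sub_right_eq_self (fun y => gaussianPDFReal 0 v y * (y + m)) m]
  have h2 : ∀ y : ℝ, gaussianPDFReal 0 v y * (y + m)
      = gaussianPDFReal 0 v y * y + gaussianPDFReal 0 v y * m := by intro y; ring
  simp_rw [h2]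
  rw [integral_add (g1 hv) ((integrable_gaussianPDFReal 0 v).mul_const m),
    e1 hv, MeasureTheory.integral_mul_const, integral_gaussianPDFReal_eq_one 0 hv]
  ring

lemma integrable_sq_gaussianReal (m : ℝ) (v : ℝ≥0) :
    Integrable (fun x : ℝ => x ^ 2) (gaussianReal m v) := by
  by_cases hv : v = 0
  · simp only [hv, gaussianReal_zero_var]
    exact (integrable_const (m ^ 2 : ℝ)).congr (ae_eq_dirac (fun x : ℝ => x ^ 2)).symm
  rw [integrable_gaussianReal_iff m _ hv]
  have hF : Integrable (fun y : ℝ => gaussianPDFReal 0 v y * (y + m) ^ 2) := by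
    have h1 : Integrable (fun y : ℝ => (gaussianPDFReal 0 v y * y ^ 2
        + 2 * m * (gaussianPDFReal 0 v y * y)) + gaussianPDFReal 0 v y * m ^ 2) :=
      ((g2 hv).add ((g1 hv).const_mul (2*m))).add
        ((integrable_gaussianPDFReal 0 v).mul_const (m^2))
    refine h1.congr ?_
    filter_upwards with x; ring
  refine (hF.comp_sub_right m).congr ?_
  filter_upwards with x
  rw [sub_add_cancel, ← pdf_center]

lemma integral_sq_gaussianReal (m : ℝ) (v : ℝ≥0) :
    ∫ x, x ^ 2 ∂(gaussianReal m v) = m ^ 2 + v := by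
  by_cases hv : v = 0
  · simp [hv, gaussianReal_zero_var, integral_dirac]
  rw [integral_gaussianReal' m _ hv]
  have h : ∀ x : ℝ, gaussianPDFReal m v x * x ^ 2
      = (fun y => gaussianPDFReal 0 v y * (y + m) ^ 2) (x - m) := by
    intro x; simp only [sub_add_cancel, ← pdf_center]
  simp_rw [h]
  rw [integral_sub_right_eq_self (fun y => gaussianPDFReal 0 v y * (y + m) ^ 2) m]
  have h2 : ∀ y : ℝ, gaussianPDFReal 0 v y * (y + m) ^ 2
      = gaussianPDFReal 0 v y * y ^ 2 + (2 * m) * (gaussianPDFReal 0 v y * y)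
        + gaussianPDFReal 0 v y * m ^ 2 := by intro y; ring
  simp_rw [h2]
  have hA : Integrable (fun y : ℝ => gaussianPDFReal 0 v y * y ^ 2) := g2 hv
  have hB : Integrable (fun y : ℝ => 2 * m * (gaussianPDFReal 0 v y * y)) :=
    (g1 hv).const_mul (2*m)
  have hAB : Integrable (fun y : ℝ => gaussianPDFReal 0 v y * y ^ 2
      + 2 * m * (gaussianPDFReal 0 v y * y)) := hA.add hB
  rw [integral_add hAB ((integrable_gaussianPDFReal 0 v).mul_const (m^2)),
    integral_add hA hB,
    e2 hv, MeasureTheory.integral_const_mul, e1 hv,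
    MeasureTheory.integral_mul_const, integral_gaussianPDFReal_eq_one 0 hv]
  ring

end Main

lemma swap3 {p K : ℕ} (f : Fin p → Fin K → Fin K → ℝ) :
    ∑ k, ∑ l, ∑ j, f j k l = ∑ j, ∑ k, ∑ l, f j k l := by
  have h1 : ∀ k, ∑ l, ∑ j, f j k l = ∑ j, ∑ l, f j k l := fun k => Finset.sum_comm
  simp_rw [h1]
  exact Finset.sum_comm

lemma helper1 {p K : ℕ} (β : Fin K → ℝ) (u : Fin p → Fin K → ℝ) (d : Fin p → ℝ) :
    ∑ k, ∑ l, β k * (∑ j, u j k * u j l / d j) * β l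
      = ∑ j, (∑ k, u j k * β k) ^ 2 / d j := by
  simp_rw [Finset.mul_sum, Finset.sum_mul]
  rw [swap3 (fun j k l => β k * (u j k * u j l / d j) * β l)]
  refine Finset.sum_congr rfl fun j _ => ?_
  rw [pow_two, Finset.sum_mul_sum, Finset.sum_div]
  refine Finset.sum_congr rfl fun k _ => ?_
  rw [Finset.sum_div]
  refine Finset.sum_congr rfl fun l _ => ?_
  ring

lemma helper2 {p K : ℕ} (β : Fin K → ℝ) (S : Fin p → Fin K → Fin K → ℝ) (d : Fin p → ℝ) :
    ∑ k, ∑ l, β k * (∑ j, S j k l / d j) * β l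
      = ∑ j, (∑ k, ∑ l, β k * S j k l * β l) / d j := by
  simp_rw [Finset.mul_sum, Finset.sum_mul]
  rw [swap3 (fun j k l => β k * (S j k l / d j) * β l)]
  refine Finset.sum_congr rfl fun j _ => ?_
  rw [Finset.sum_div]
  refine Finset.sum_congr rfl fun k _ => ?_
  rw [Finset.sum_div]
  refine Finset.sum_congr rfl fun l _ => ?_
  ring

/-- A random vector is Gaussian with mean `m` and covariance `S` iff every linear functional
of it is a real Gaussian with the corresponding mean and variance. -/
def IsGaussianVec {Ω : Type*} [MeasurableSpace Ω] {K : ℕ} (μ : Measure Ω)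
    (X : Ω → Fin K → ℝ) (m : Fin K → ℝ) (S : Matrix (Fin K) (Fin K) ℝ) : Prop :=
  ∀ a : Fin K → ℝ,
    Measure.map (fun ω => ∑ i, a i * X ω i) μ =
      gaussianReal (∑ i, a i * m i) (Real.toNNReal (a ⬝ᵥ S *ᵥ a))

theorem debiased_loss_unbiased
    {Ω : Type*} [MeasurableSpace Ω] (μ : Measure Ω) [IsProbabilityMeasure μ]
    (p K : ℕ)
    (ghat : Fin p → Ω → Fin K → ℝ) (Ghat : Fin p → Ω → ℝ)
    (γ : Fin p → Fin K → ℝ) (Γ : Fin p → ℝ)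
    (SX : Fin p → Matrix (Fin K) (Fin K) ℝ) (σY : Fin p → ℝ)
    (hγmeas : ∀ j, Measurable (ghat j)) (hΓmeas : ∀ j, Measurable (Ghat j))
    (hSX : ∀ j, (SX j).PosSemidef) (hσY : ∀ j, 0 < σY j)
    (hγ : ∀ j, IsGaussianVec μ (ghat j) (γ j) (SX j))
    (hΓ : ∀ j, Measure.map (Ghat j) μ =
      gaussianReal (Γ j) (Real.toNNReal ((σY j) ^ 2)))
    (hindep : iIndepFun
      (β := fun t : Fin p ⊕ Fin p => Sum.elim (fun _ => Fin K → ℝ) (fun _ => ℝ) t)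
      (m := fun t => match t with
        | Sum.inl _ => (inferInstance : MeasurableSpace (Fin K → ℝ))
        | Sum.inr _ => (inferInstance : MeasurableSpace ℝ))
      (fun t => match t with
        | Sum.inl j => ghat j
        | Sum.inr j => Ghat j) μ) :
    ∀ β : Fin K → ℝ,
      (∫ ω, ((1 / 2 : ℝ) * ∑ k, ∑ l, β k *
            ((∑ j, ghat j ω k * ghat j ω l / σY j ^ 2) - ∑ j, SX j k l / σY j ^ 2) * β l
          - ∑ j, Ghat j ω * (∑ k, ghat j ω k * β k) / σY j ^ 2) ∂μ)
        = (1 / 2 : ℝ) * (∑ k, ∑ l, β k * (∑ j, γ j k * γ j l / σY j ^ 2) * β l)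
          - ∑ j, Γ j * (∑ k, γ j k * β k) / σY j ^ 2 := by
  intro β
  classical
  set L : Fin p → Ω → ℝ := fun j ω => ∑ k, ghat j ω k * β k with hL
  set M : Fin p → ℝ := fun j => ∑ k, γ j k * β k with hM
  set Q : Fin p → ℝ := fun j => ∑ k, ∑ l, β k * SX j k l * β l with hQdef
  have hLmeas : ∀ j, Measurable (L j) := fun j =>
    Finset.measurable_sum _ fun k _ => ((measurable_pi_apply k).comp (hγmeas j)).mul_const _
  have hmap : ∀ j, Measure.map (L j) μ
      = gaussianReal (M j) (Real.toNNReal (β ⬝ᵥ SX j *ᵥ β)) := by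
    intro j
    have h1 := hγ j β
    have h2 : (fun ω => ∑ i, β i * ghat j ω i) = L j := by
      funext ω; exact Finset.sum_congr rfl fun i _ => mul_comm _ _
    have h3 : (∑ i, β i * γ j i) = M j := Finset.sum_congr rfl fun i _ => mul_comm _ _
    rwa [h2, h3] at h1
  have hQnn : ∀ j, 0 ≤ β ⬝ᵥ SX j *ᵥ β := by
    intro j
    have := (hSX j).dotProduct_mulVec_nonneg β
    simpa using this
  have hQ : ∀ j, ((Real.toNNReal (β ⬝ᵥ SX j *ᵥ β)) : ℝ) = Q j := by
    intro j
    rw [Real.coe_toNNReal _ (hQnn j), hQdef]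
    simp only [dotProduct, Matrix.mulVec, Finset.mul_sum]
    exact Finset.sum_congr rfl fun k _ => Finset.sum_congr rfl fun l _ => by ring
  -- integrability and moments of L j
  have hIL : ∀ j, Integrable (L j) μ := by
    intro j
    have h := (integrable_map_measure (g := fun x : ℝ => x)
      (by rw [hmap j]; exact aestronglyMeasurable_id) (hLmeas j).aemeasurable).mp
      (by rw [hmap j]; exact integrable_id_gaussianReal _ _)
    exact h
  have hEL : ∀ j, ∫ ω, L j ω ∂μ = M j := by
    intro j
    have h := integral_map (φ := L j) (f := fun x : ℝ => x)
      (hLmeas j).aemeasurable (by rw [hmap j]; exact aestronglyMeasurable_id)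
    rw [hmap j, _root_.integral_id_gaussianReal] at h
    exact h.symm
  have hIL2 : ∀ j, Integrable (fun ω => L j ω ^ 2) μ := by
    intro j
    have h := (integrable_map_measure (g := fun x : ℝ => x ^ 2)
      (by rw [hmap j]; exact (continuous_pow 2).aestronglyMeasurable) (hLmeas j).aemeasurable).mp
      (by rw [hmap j]; exact integrable_sq_gaussianReal _ _)
    exact h
  have hEL2 : ∀ j, ∫ ω, L j ω ^ 2 ∂μ = M j ^ 2 + Q j := by
    intro j
    have h := integral_map (φ := L j) (f := fun x : ℝ => x ^ 2)
      (hLmeas j).aemeasurable (by rw [hmap j]; exact (continuous_pow 2).aestronglyMeasurable)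
    rw [hmap j, integral_sq_gaussianReal, hQ j] at h
    exact h.symm
  -- integrability and moments of Ghat j
  have hIG : ∀ j, Integrable (Ghat j) μ := by
    intro j
    have h := (integrable_map_measure (g := fun x : ℝ => x)
      (by rw [hΓ j]; exact aestronglyMeasurable_id) (hΓmeas j).aemeasurable).mp
      (by rw [hΓ j]; exact integrable_id_gaussianReal _ _)
    exact h
  have hEG : ∀ j, ∫ ω, Ghat j ω ∂μ = Γ j := by
    intro j
    have h := integral_map (φ := Ghat j) (f := fun x : ℝ => x)
      (hΓmeas j).aemeasurable (by rw [hΓ j]; exact aestronglyMeasurable_id)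
    rw [hΓ j, _root_.integral_id_gaussianReal] at h
    exact h.symm
  -- independence
  have hIndepGL : ∀ j, IndepFun (Ghat j) (L j) μ := by
    intro j
    have h1 : IndepFun (Ghat j) (ghat j) μ :=
      hindep.indepFun (show (Sum.inr j : Fin p ⊕ Fin p) ≠ Sum.inl j by simp)
    have h2 : Measurable (fun v : Fin K → ℝ => ∑ k, v k * β k) :=
      Finset.measurable_sum _ fun k _ => (measurable_pi_apply k).mul_const _
    exact h1.comp measurable_id h2
  have hIGL : ∀ j, Integrable (fun ω => Ghat j ω * L j ω) μ := fun j =>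
    (hIndepGL j).integrable_mul (hIG j) (hIL j)
  have hEGL : ∀ j, ∫ ω, Ghat j ω * L j ω ∂μ = Γ j * M j := by
    intro j
    have h := (hIndepGL j).integral_fun_mul_eq_mul_integral (hIG j).aestronglyMeasurable (hIL j).aestronglyMeasurable
    rw [hEG j, hEL j] at h
    exact h
  -- the per-j summand
  set A : Fin p → Ω → ℝ :=
    fun j ω => ((1 / 2 : ℝ) * (L j ω ^ 2 - Q j) - Ghat j ω * L j ω) / σY j ^ 2 with hA
  have hIA : ∀ j, Integrable (A j) μ := by
    intro j
    exact ((((hIL2 j).sub (integrable_const (Q j))).const_mul (1/2)).sub (hIGL j)).div_const _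
  have hσ2 : ∀ j, (σY j : ℝ) ^ 2 ≠ 0 := fun j => pow_ne_zero 2 (hσY j).ne'
  have hEA : ∀ j, ∫ ω, A j ω ∂μ = ((1 / 2 : ℝ) * M j ^ 2 - Γ j * M j) / σY j ^ 2 := by
    intro j
    have h1 : Integrable (fun ω => L j ω ^ 2 - Q j) μ := (hIL2 j).sub (integrable_const _)
    have h2 : Integrable (fun ω => (1/2:ℝ) * (L j ω ^ 2 - Q j)) μ := h1.const_mul _
    have hEA1 : ∫ ω, ((1/2:ℝ) * (L j ω ^ 2 - Q j) - Ghat j ω * L j ω) ∂μ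
        = (1/2:ℝ) * (M j ^ 2 + Q j - Q j) - Γ j * M j := by
      rw [integral_sub h2 (hIGL j), MeasureTheory.integral_const_mul,
        integral_sub (hIL2 j) (integrable_const (Q j)), hEL2 j, integral_const, hEGL j]
      simp
    rw [hA]
    simp only
    rw [integral_div, hEA1]
    ring_nf
  -- rewrite the integrand pointwise
  have key : ∀ ω, ((1 / 2 : ℝ) * ∑ k, ∑ l, β k *
            ((∑ j, ghat j ω k * ghat j ω l / σY j ^ 2) - ∑ j, SX j k l / σY j ^ 2) * β l
          - ∑ j, Ghat j ω * (∑ k, ghat j ω k * β k) / σY j ^ 2) = ∑ j, A j ω := by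
    intro ω
    have e1 : ∀ k l, β k *
          ((∑ j, ghat j ω k * ghat j ω l / σY j ^ 2) - ∑ j, SX j k l / σY j ^ 2) * β l
        = β k * (∑ j, ghat j ω k * ghat j ω l / σY j ^ 2) * β l
          - β k * (∑ j, SX j k l / σY j ^ 2) * β l := by intro k l; ring
    simp_rw [e1, Finset.sum_sub_distrib]
    rw [helper1 β (fun j k => ghat j ω k) (fun j => σY j ^ 2),
      helper2 β (fun j k l => SX j k l) (fun j => σY j ^ 2)]
    simp only [hA, hL, hQdef]
    have e2 : ∀ j, ((1/2:ℝ) * ((∑ k, ghat j ω k * β k) ^ 2 - ∑ k, ∑ l, β k * SX j k l * β l)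
          - Ghat j ω * ∑ k, ghat j ω k * β k) / σY j ^ 2
        = (1/2:ℝ) * ((∑ k, ghat j ω k * β k) ^ 2 / σY j ^ 2)
          - (1/2:ℝ) * ((∑ k, ∑ l, β k * SX j k l * β l) / σY j ^ 2)
          - Ghat j ω * (∑ k, ghat j ω k * β k) / σY j ^ 2 := fun j => by ring
    simp_rw [e2, Finset.sum_sub_distrib, ← Finset.mul_sum]
    ring
  rw [show (∫ ω, ((1 / 2 : ℝ) * ∑ k, ∑ l, β k *
            ((∑ j, ghat j ω k * ghat j ω l / σY j ^ 2) - ∑ j, SX j k l / σY j ^ 2) * β l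
          - ∑ j, Ghat j ω * (∑ k, ghat j ω k * β k) / σY j ^ 2) ∂μ)
      = ∫ ω, ∑ j, A j ω ∂μ from integral_congr_ae (Filter.Eventually.of_forall key)]
  rw [integral_finset_sum _ (fun j _ => hIA j)]
  simp_rw [hEA]
  rw [helper1 β γ (fun j => σY j ^ 2)]
  have e3 : ∀ j : Fin p, ((1/2:ℝ) * M j ^ 2 - Γ j * M j) / σY j ^ 2
      = (1/2:ℝ) * (M j ^ 2 / σY j ^ 2) - Γ j * M j / σY j ^ 2 := by
    intro j
    ring
  simp_rw [e3, Finset.sum_sub_distrib, ← Finset.mul_sum]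
  rfl
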